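/- Let c ∈ ℕ and let Q be a probability measure on {1,…,c}^c such that Q gives full measure to the set of tuples (x₁,…,x_c) with pairwise distinct entries, and such that for each 1 ≤ i < j ≤ c the coordinate marginals p_i Q and p_j Q are either equal or mutually singular. Let P₁, …, P_k be the distinct coordinate marginals of Q, and for each 1 ≤ r ≤ k set I_r = {i : P_r({i}) > 0} and J_r = {i : p_i Q = P_r}. Then I₁, …, I_k form a partition of {1,…,c}, |I_r| = |J_r| for each r, each P_r is the uniform distribution on I_r, and for every atom (x₁,…,x_c) of Q and every r, the set {x_j : j ∈ J_r} equals I_r. -/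

import Mathlib

open MeasureTheory Set Filter
open scoped ENNReal

/-- Let `Q` be a probability measure on `{1,…,c}^c` concentrated on
injective tuples, whose coordinate marginals are pairwise either equal or mutually
singular. Let `P 1, …, P k` be the distinct marginals, `I r` the support of `P r` and
`J r` the set of coordinates whose marginal is `P r`. Then the `I r` partition
`{1,…,c}`, `|I r| = |J r|`, each `P r` is uniform on `I r`, and every atom of `Q` maps
`J r` onto `I r`. -/
theorem marginal_partition_of_singular_or_equal
    (c : ℕ) (Q : Measure (Fin c → Fin c)) [IsProbabilityMeasure Q]
    (hinj : Q {x | Function.Injective x} = 1)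
    (hsing : ∀ i j : Fin c, Q.map (fun x => x i) = Q.map (fun x => x j) ∨
      (Q.map (fun x => x i)).MutuallySingular (Q.map (fun x => x j)))
    (k : ℕ) (P : Fin k → Measure (Fin c)) (hPinj : Function.Injective P)
    (hPmarg : ∀ r : Fin k, ∃ i : Fin c, Q.map (fun x => x i) = P r)
    (hmargP : ∀ i : Fin c, ∃ r : Fin k, Q.map (fun x => x i) = P r)
    (I J : Fin k → Set (Fin c))
    (hI : ∀ r, I r = {i | 0 < P r {i}})
    (hJ : ∀ r, J r = {i | Q.map (fun x => x i) = P r}) :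
    (Pairwise (Function.onFun Disjoint I) ∧ ⋃ r, I r = Set.univ) ∧
    (∀ r, (I r).ncard = (J r).ncard) ∧
    (∀ r, (∀ i ∈ I r, P r {i} = ((I r).ncard : ℝ≥0∞)⁻¹) ∧
      ∀ i ∉ I r, P r {i} = 0) ∧
    ∀ x : Fin c → Fin c, 0 < Q {x} → ∀ r, x '' J r = I r := by
  classical
  -- classification map ρ
  choose ρ hρ using hmargP
  -- J r = fiber of ρ
  have hJρ : ∀ r, J r = {i | ρ i = r} := by
    intro r
    rw [hJ r]
    ext i
    simp only [mem_setOf_eq]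
    constructor
    · intro h; exact hPinj ((hρ i).symm.trans h)
    · intro h; rw [← h]; exact hρ i
  -- disjoint supports for distinct P's
  have hdisj : ∀ r s : Fin k, r ≠ s → ∀ a : Fin c, 0 < P r {a} → P s {a} = 0 := by
    intro r s hrs a har
    obtain ⟨i, hi⟩ := hPmarg r
    obtain ⟨j, hj⟩ := hPmarg s
    rcases hsing i j with heq | hms
    · exact absurd (hPinj (hi.symm.trans (heq.trans hj))) hrs
    · rw [hi, hj] at hms
      obtain ⟨t, ht0, ht1, ht2⟩ := hms
      by_cases hat : a ∈ t
      · exact absurd (lt_of_lt_of_le har (measure_mono (singleton_subset_iff.2 hat)))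
          (by rw [ht1]; exact lt_irrefl 0)
      · exact le_antisymm (le_trans (measure_mono (singleton_subset_iff.2 hat)) (le_of_eq ht2))
          (zero_le)
  -- key sum identity : ∑ i, (p_i Q) {a} = 1
  have hmeas : ∀ s : Set (Fin c → Fin c), MeasurableSet s := fun s => s.toFinite.measurableSet
  have hcompl : Q {x : Fin c → Fin c | Function.Injective x}ᶜ = 0 := by
    rw [measure_compl (hmeas _) (measure_ne_top Q _), hinj, measure_univ, tsub_self]
  have hsum : ∀ a : Fin c, ∑ i, (Q.map (fun x => x i)) {a} = 1 := by
    intro a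
    have hmap : ∀ i, (Q.map (fun x => x i)) {a} = Q {x | x i = a} := by
      intro i
      rw [Measure.map_apply (measurable_pi_apply i) (MeasurableSet.singleton a)]
      rfl
    set S : Set (Fin c → Fin c) := {x | Function.Injective x}
    have h1 : ∀ i, Q {x | x i = a} = Q ({x | x i = a} ∩ S) :=
      fun i => (measure_inter_conull hcompl).symm
    have h2 : (⋃ i, ({x : Fin c → Fin c | x i = a} ∩ S)) = S := by
      ext x
      simp only [mem_iUnion, mem_inter_iff, mem_setOf_eq]
      constructor
      · rintro ⟨i, _, hx⟩; exact hx
      · intro hx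
        obtain ⟨i, hi⟩ := Finite.surjective_of_injective hx a
        exact ⟨i, hi, hx⟩
    have h3 : Pairwise (Function.onFun Disjoint
        (fun i => ({x : Fin c → Fin c | x i = a} ∩ S))) := by
      intro i j hij
      refine Set.disjoint_left.2 ?_
      rintro x ⟨hxi, hxS⟩ ⟨hxj, _⟩
      exact hij (hxS (hxi.trans hxj.symm))
    calc ∑ i, (Q.map (fun x => x i)) {a}
        = ∑ i, Q ({x | x i = a} ∩ S) := by
          refine Finset.sum_congr rfl fun i _ => ?_
          rw [hmap i, h1 i]
      _ = Q (⋃ i, ({x : Fin c → Fin c | x i = a} ∩ S)) := by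
          rw [measure_iUnion h3 (fun i => hmeas _), tsum_fintype]
      _ = 1 := by rw [h2]; exact hinj
  -- cardinalities as finset counts
  have hncard : ∀ s : Set (Fin c), s.ncard = (Finset.univ.filter (· ∈ s)).card := by
    intro s
    rw [Set.ncard_eq_toFinset_card' s]
    simp [Set.toFinset_setOf]
  have hJcard : ∀ r, (J r).ncard = (Finset.univ.filter (fun i => ρ i = r)).card := by
    intro r
    rw [hJρ r, hncard]
    congr 1
    ext i
    simp [mem_setOf_eq]
  -- uniform value on support : for a ∈ I r, (J r).ncard * P r {a} = 1
  have hval : ∀ r, ∀ a ∈ I r, ((J r).ncard : ℝ≥0∞) * P r {a} = 1 := by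
    intro r a ha
    rw [hI r] at ha
    have h4 : ∑ i, (if ρ i = r then P r {a} else 0) = 1 := by
      rw [← hsum a]
      refine Finset.sum_congr rfl fun i _ => ?_
      rw [hρ i]
      by_cases h : ρ i = r
      · rw [if_pos h, h]
      · rw [if_neg h]
        exact (hdisj r (ρ i) (fun hh => h hh.symm) a ha).symm
    rw [← Finset.sum_filter, Finset.sum_const, nsmul_eq_mul] at h4
    rw [hJcard r]
    exact h4
  -- J r nonempty cardinality, value formula
  have hJpos : ∀ r, ∀ a ∈ I r, (J r).ncard ≠ 0 := by
    intro r a ha h0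
    have := hval r a ha
    rw [h0] at this
    simp at this
  have hPval : ∀ r, ∀ a ∈ I r, P r {a} = ((J r).ncard : ℝ≥0∞)⁻¹ := by
    intro r a ha
    exact ENNReal.eq_inv_of_mul_eq_one_left (by rw [mul_comm]; exact hval r a ha)
  have hPzero : ∀ r, ∀ a, a ∉ I r → P r {a} = 0 := by
    intro r a ha
    rw [hI r] at ha
    simpa using (not_lt.1 (fun h => ha h)).antisymm (zero_le)
  -- each P r is a probability measure
  have hPprob : ∀ r, P r Set.univ = 1 := by
    intro r
    obtain ⟨i, hi⟩ := hPmarg r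
    rw [← hi, Measure.map_apply (measurable_pi_apply i) MeasurableSet.univ]
    simp
  -- P r univ = ∑ a, P r {a}
  have hPuniv : ∀ r : Fin k, P r Set.univ = ∑ a, P r {a} := by
    intro r
    have h3 : Pairwise (Function.onFun Disjoint (fun a : Fin c => ({a} : Set (Fin c)))) := by
      intro a b hab
      simpa using hab
    rw [← iUnion_of_singleton (Fin c),
      measure_iUnion h3 (fun a => MeasurableSet.singleton a), tsum_fintype]
  -- |I r| = |J r|
  have hIJ : ∀ r, (I r).ncard = (J r).ncard := by
    intro r
    by_cases hIe : I r = ∅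
    · -- then ∑ a, P r {a} = 0, contradicting probability
      exfalso
      have : P r Set.univ = 0 := by
        rw [hPuniv r]
        refine Finset.sum_eq_zero fun a _ => hPzero r a (by rw [hIe]; exact notMem_empty a)
      rw [hPprob r] at this
      exact one_ne_zero this
    · obtain ⟨a0, ha0⟩ := Set.nonempty_iff_ne_empty.2 hIe
      have hJ0 : (J r).ncard ≠ 0 := hJpos r a0 ha0
      have : (1 : ℝ≥0∞) = ((I r).ncard : ℝ≥0∞) * ((J r).ncard : ℝ≥0∞)⁻¹ := by
        rw [← hPprob r, hPuniv r]
        calc ∑ a, P r {a} = ∑ a, (if a ∈ I r then ((J r).ncard : ℝ≥0∞)⁻¹ else 0) := by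
              refine Finset.sum_congr rfl fun a _ => ?_
              by_cases h : a ∈ I r
              · rw [if_pos h, hPval r a h]
              · rw [if_neg h, hPzero r a h]
          _ = ((I r).ncard : ℝ≥0∞) * ((J r).ncard : ℝ≥0∞)⁻¹ := by
              rw [← Finset.sum_filter, Finset.sum_const, nsmul_eq_mul, hncard (I r)]
      have h2 : ((I r).ncard : ℝ≥0∞) / ((J r).ncard : ℝ≥0∞) = 1 := by
        rw [div_eq_mul_inv]; exact this.symm
      have h3 := (ENNReal.div_eq_one_iff (by exact_mod_cast hJ0) (by simp)).1 h2
      exact_mod_cast h3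
  -- uniform formula with I r
  have hPvalI : ∀ r, ∀ a ∈ I r, P r {a} = ((I r).ncard : ℝ≥0∞)⁻¹ := by
    intro r a ha
    rw [hPval r a ha, hIJ r]
  -- partition : disjoint
  have hIdisj : Pairwise (Function.onFun Disjoint I) := by
    intro r s hrs
    refine Set.disjoint_left.2 fun a har has => ?_
    rw [hI r] at har
    rw [hI s] at has
    exact absurd (hdisj r s hrs a har) (ne_of_gt has)
  -- partition : cover
  have hIcover : ⋃ r, I r = Set.univ := by
    apply Set.eq_univ_of_forall
    intro a
    by_contra ha
    simp only [mem_iUnion, not_exists] at ha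
    have : ∑ i, (Q.map (fun x => x i)) {a} = 0 := by
      refine Finset.sum_eq_zero fun i _ => ?_
      rw [hρ i]
      by_contra h
      have hpos : 0 < P (ρ i) {a} := (zero_le).lt_of_ne (fun hh => h hh.symm)
      exact ha (ρ i) (by rw [hI (ρ i)]; exact hpos)
    rw [hsum a] at this
    exact one_ne_zero this
  refine ⟨⟨hIdisj, hIcover⟩, hIJ, fun r => ⟨hPvalI r, hPzero r⟩, ?_⟩
  -- atoms
  intro x hx r
  have hxinj : Function.Injective x := by
    by_contra hxn
    have : Q {x} = 0 := by
      refine le_antisymm (le_trans (measure_mono ?_) (le_of_eq hcompl)) (zero_le)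
      intro y hy
      rw [mem_singleton_iff] at hy
      subst hy
      exact hxn
    rw [this] at hx
    exact lt_irrefl 0 hx
  have hsub : x '' J r ⊆ I r := by
    rintro _ ⟨j, hj', rfl⟩
    rw [hJ r] at hj'
    rw [hI r]
    have : Q {y : Fin c → Fin c | y j = x j} > 0 := by
      refine lt_of_lt_of_le hx (measure_mono ?_)
      intro y hy
      rw [mem_singleton_iff] at hy
      subst hy
      rfl
    have hm : (Q.map (fun y => y j)) {x j} = Q {y | y j = x j} := by
      rw [Measure.map_apply (measurable_pi_apply j) (MeasurableSet.singleton _)]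
      rfl
    show 0 < P r {x j}
    rw [← hj', hm]
    exact this
  have hcard : (I r).ncard ≤ (x '' J r).ncard := by
    rw [Set.ncard_image_of_injective _ hxinj, hIJ r]
  exact Set.eq_of_subset_of_ncard_le hsub hcard (Set.toFinite _)
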